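/- Let Σ be a d×d real positive semidefinite matrix, let t = Tr(Σ²), and let x be a centered Gaussian random vector on ℝ^d with covariance Σ. Then for all deterministic u, v ∈ ℝ^d: E[(⟨u,x⟩⁴ − 6t·⟨u,x⟩² + 3t²)·(⟨v,x⟩⁴ − 6t·⟨v,x⟩² + 3t²)] = 24·(uᵀΣv)⁴ + 72·(uᵀΣu − t)·(vᵀΣv − t)·(uᵀΣv)² + 9·(uᵀΣu − t)²·(vᵀΣv − t)². -/

import Mathlib

open Matrix MeasureTheory ProbabilityTheory

/-- The standard Gaussian measure on `ℝ^d` (i.i.d. standard normal coordinates). -/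
noncomputable def stdGaussianPi (d : ℕ) : Measure (Fin d → ℝ) :=
  Measure.pi fun _ : Fin d => gaussianReal 0 1

section
open scoped ComplexOrder
noncomputable def Matrix.PosSemidef.sqrt {n 𝕜 : Type*} [Fintype n] [DecidableEq n] [RCLike 𝕜]
    {A : Matrix n n 𝕜} (hA : A.PosSemidef) : Matrix n n 𝕜 :=
  hA.1.eigenvectorUnitary.1 * diagonal ((↑) ∘ (√·) ∘ hA.1.eigenvalues) *
    (star hA.1.eigenvectorUnitary : Matrix n n 𝕜)
end


open Real Set
open Real MeasureTheory ProbabilityTheory Set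

lemma negone_lt (n : ℕ) : (-1:ℝ) < n := by
  have : (0:ℝ) ≤ n := Nat.cast_nonneg n; linarith

lemma integrable_pow_exp (n : ℕ) : Integrable (fun x : ℝ => x ^ n * exp (-(1/2) * x^2)) := by
  have h := integrable_rpow_mul_exp_neg_mul_sq (b := 1/2) (by norm_num) (s := n) (negone_lt n)
  simpa [Real.rpow_natCast] using h

lemma Ioi_pow_exp (n : ℕ) : ∫ x : ℝ in Ioi 0, x ^ n * exp (-(1/2) * x^2)
    = (1/2:ℝ) ^ (-((n:ℝ) + 1) / 2) * (1 / 2) * Gamma (((n:ℝ) + 1) / 2) := by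
  rw [← integral_rpow_mul_exp_neg_mul_rpow (p := 2) (q := n) (b := 1/2) (by norm_num)
    (negone_lt n) (by norm_num)]
  refine setIntegral_congr_fun measurableSet_Ioi (fun x hx => ?_)
  rw [Real.rpow_natCast]
  norm_num

lemma Ioi_rec (n : ℕ) : ∫ x : ℝ in Ioi 0, x ^ (n+2) * exp (-(1/2) * x^2)
    = ((n:ℝ)+1) * ∫ x : ℝ in Ioi 0, x ^ n * exp (-(1/2) * x^2) := by
  rw [Ioi_pow_exp, Ioi_pow_exp]
  have h1 : ((n:ℝ) + 2 + 1) / 2 = ((n:ℝ)+1)/2 + 1 := by ring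
  have h2 : Gamma (((n:ℝ) + 2 + 1) / 2) = (((n:ℝ)+1)/2) * Gamma (((n:ℝ)+1)/2) := by
    rw [h1, Real.Gamma_add_one (by positivity)]
  have h3 : (1/2:ℝ) ^ (-((n:ℝ) + 2 + 1) / 2) = (1/2:ℝ) ^ (-((n:ℝ) + 1) / 2) * 2 := by
    rw [show -((n:ℝ) + 2 + 1) / 2 = -((n:ℝ) + 1) / 2 + (-1) by ring,
      Real.rpow_add (by norm_num), Real.rpow_neg_one]
    norm_num
  push_cast
  rw [h2, h3]; ring

lemma even_pow_exp (n : ℕ) : ∫ x : ℝ, x ^ (2*n) * exp (-(1/2) * x^2)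
    = 2 * ∫ x : ℝ in Ioi 0, x ^ (2*n) * exp (-(1/2) * x^2) := by
  rw [← integral_comp_abs (f := fun x => x ^ (2*n) * exp (-(1/2) * x^2))]
  congr 1 with x
  simp [pow_mul, sq_abs]

lemma odd_pow_exp (n : ℕ) : ∫ x : ℝ, x ^ (2*n+1) * exp (-(1/2) * x^2) = 0 := by
  have h := integral_neg_eq_self (fun x : ℝ => x ^ (2*n+1) * exp (-(1/2) * x^2)) volume
  have h2 : (fun x : ℝ => (-x) ^ (2*n+1) * exp (-(1/2) * (-x)^2))
      = fun x : ℝ => -(x ^ (2*n+1) * exp (-(1/2) * x^2)) := by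
    funext x
    rw [Odd.neg_pow ⟨n, by ring⟩, neg_sq]
    ring
  rw [h2, integral_neg] at h
  linarith

lemma base_exp : ∫ x : ℝ, x ^ 0 * exp (-(1/2) * x^2) = √(2*π) := by
  simp only [pow_zero, one_mul]
  have := integral_gaussian (1/2)
  rw [show π / (1/2) = 2*π by ring] at this
  simpa using this

noncomputable def gm : ℕ → ℝ
  | 0 => 1
  | 2 => 1
  | 4 => 3
  | 6 => 15
  | 8 => 105
  | _ => 0

lemma base_exp' : ∫ x : ℝ, exp (-(1/2) * x^2) = √(2*π) := by
  have := base_exp; simpa using this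

lemma full_pow_exp (n : ℕ) (hn : n ≤ 8) :
    ∫ x : ℝ, x ^ n * exp (-(1/2) * x^2) = gm n * √(2*π) := by
  have key : ∀ m : ℕ, ∫ x : ℝ, x ^ (2*m+2) * exp (-(1/2) * x^2)
      = (2*(m:ℝ)+1) * ∫ x : ℝ, x ^ (2*m) * exp (-(1/2) * x^2) := by
    intro m
    have h1 := even_pow_exp m
    have h2 := even_pow_exp (m+1)
    rw [show 2*(m+1) = 2*m+2 from by ring] at h2
    rw [Ioi_rec (2*m)] at h2
    push_cast at h2
    linear_combination h2 - (2*(m:ℝ)+1) * h1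
  have h2 := key 0; have h4 := key 1; have h6 := key 2; have h8 := key 3
  simp only [show (2*0+2:ℕ)=2 from rfl, show (2*0:ℕ)=0 from rfl, show (2*1+2:ℕ)=4 from rfl, show (2*1:ℕ)=2 from rfl, show (2*2+2:ℕ)=6 from rfl, show (2*2:ℕ)=4 from rfl, show (2*3+2:ℕ)=8 from rfl, show (2*3:ℕ)=6 from rfl, pow_zero, one_mul, Nat.cast_zero, Nat.cast_one, Nat.cast_ofNat] at h2 h4 h6 h8
  interval_cases n
  · rw [base_exp]; norm_num [gm]
  · have h := odd_pow_exp 0; rw [show 2*0+1 = 1 from rfl] at h; rw [h]; norm_num [gm]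
  · rw [h2, base_exp']; norm_num [gm]
  · rw [show 3 = 2*1+1 from rfl, odd_pow_exp]; norm_num [gm]
  · rw [h4, h2, base_exp']; norm_num [gm]
  · rw [show 5 = 2*2+1 from rfl, odd_pow_exp]; norm_num [gm]
  · rw [h6, h4, h2, base_exp']; norm_num [gm]; ring
  · rw [show 7 = 2*3+1 from rfl, odd_pow_exp]; norm_num [gm]
  · rw [h8, h6, h4, h2, base_exp']; norm_num [gm]; ring

lemma gaussianPDFReal_01 (x : ℝ) :
    gaussianPDFReal 0 1 x = (√(2*π))⁻¹ * exp (-(1/2) * x^2) := by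
  simp only [gaussianPDFReal, NNReal.coe_one, mul_one, sub_zero]
  ring_nf

lemma integrable_pow_gaussianReal (n : ℕ) :
    Integrable (fun x : ℝ => x ^ n) (gaussianReal 0 1) := by
  rw [gaussianReal_of_var_ne_zero 0 one_ne_zero]
  have hmeas : Measurable fun x : ℝ => (gaussianPDFReal 0 1 x).toNNReal :=
    (measurable_gaussianPDFReal 0 1).real_toNNReal
  have : gaussianPDF 0 1 = fun x => ((gaussianPDFReal 0 1 x).toNNReal : ENNReal) := rfl
  rw [this]
  refine (integrable_withDensity_iff_integrable_smul (E := ℝ) hmeas (g := fun x : ℝ => x ^ n)).mpr ?_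
  have : (fun x : ℝ => (gaussianPDFReal 0 1 x).toNNReal • x ^ n)
      = fun x : ℝ => (√(2*π))⁻¹ * (x ^ n * exp (-(1/2) * x^2)) := by
    funext x
    rw [NNReal.smul_def, Real.coe_toNNReal _ (gaussianPDFReal_nonneg 0 1 x),
      gaussianPDFReal_01]
    simp [smul_eq_mul]; ring
  rw [this]
  exact (integrable_pow_exp n).const_mul _

lemma integral_pow_gaussianReal (n : ℕ) (hn : n ≤ 8) :
    ∫ x : ℝ, x ^ n ∂(gaussianReal 0 1) = gm n := by
  rw [gaussianReal_of_var_ne_zero 0 one_ne_zero]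
  have hmeas : Measurable fun x : ℝ => (gaussianPDFReal 0 1 x).toNNReal :=
    (measurable_gaussianPDFReal 0 1).real_toNNReal
  have hd : gaussianPDF 0 1 = fun x => ((gaussianPDFReal 0 1 x).toNNReal : ENNReal) := rfl
  rw [hd, integral_withDensity_eq_integral_smul hmeas]
  have : (fun x : ℝ => (gaussianPDFReal 0 1 x).toNNReal • x ^ n)
      = fun x : ℝ => (√(2*π))⁻¹ * (x ^ n * exp (-(1/2) * x^2)) := by
    funext x
    rw [NNReal.smul_def, Real.coe_toNNReal _ (gaussianPDFReal_nonneg 0 1 x),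
      gaussianPDFReal_01]
    simp [smul_eq_mul]; ring
  rw [this, integral_const_mul, full_pow_exp n hn]
  have hpos : (0:ℝ) < √(2*π) := Real.sqrt_pos.mpr (by positivity)
  field_simp

open Matrix

instance (d : ℕ) : IsProbabilityMeasure (stdGaussianPi d) := by
  unfold stdGaussianPi; infer_instance

lemma dot_moment : ∀ (d : ℕ) (w : Fin d → ℝ) (n : ℕ), n ≤ 8 →
    Integrable (fun g => (w ⬝ᵥ g) ^ n) (stdGaussianPi d) ∧
    ∫ g, (w ⬝ᵥ g) ^ n ∂(stdGaussianPi d) = gm n * (w ⬝ᵥ w) ^ (n / 2) := by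
  intro d
  induction d with
  | zero =>
    intro w n hn
    have hdot : ∀ g : Fin 0 → ℝ, w ⬝ᵥ g = 0 := fun g => by
      simp [dotProduct]
    constructor
    · have : (fun g : Fin 0 → ℝ => (w ⬝ᵥ g) ^ n) = fun _ => (0:ℝ)^n := by
        funext g; rw [hdot]
      rw [this]; exact integrable_const _
    · have : (fun g : Fin 0 → ℝ => (w ⬝ᵥ g) ^ n) = fun _ => (0:ℝ)^n := by
        funext g; rw [hdot]
      rw [this, integral_const, hdot w]
      simp only [probReal_univ, one_smul]
      interval_cases n <;> norm_num [gm]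
  | succ d IH =>
    intro w n hn
    set e := MeasurableEquiv.piFinSuccAbove (fun _ : Fin (d+1) => ℝ) 0 with he
    have hmp : MeasurePreserving e (stdGaussianPi (d+1))
        ((gaussianReal 0 1).prod (stdGaussianPi d)) :=
      measurePreserving_piFinSuccAbove (fun _ : Fin (d+1) => gaussianReal 0 1) 0
    set T : (Fin d → ℝ) → ℝ := fun y => Fin.tail w ⬝ᵥ y with hT
    set F : ℝ × (Fin d → ℝ) → ℝ := fun p => (w 0 * p.1 + T p.2) ^ n with hF
    have hfun : (fun g : Fin (d+1) → ℝ => (w ⬝ᵥ g) ^ n) = F ∘ e := by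
      funext g
      simp [Function.comp_apply, hF, hT, he, MeasurableEquiv.piFinSuccAbove_apply,
        dotProduct, Fin.sum_univ_succ, Fin.tail, Fin.removeNth, Fin.succAbove]
    have expand : F = fun p => ∑ k ∈ Finset.range (n+1),
        ((w 0)^k * (n.choose k : ℝ)) * (p.1^k * (T p.2)^(n-k)) := by
      funext p
      simp only [hF]
      rw [add_pow]
      refine Finset.sum_congr rfl fun k _ => ?_
      rw [mul_pow]; ring
    have hterm : ∀ k ∈ Finset.range (n+1),
        Integrable (fun p : ℝ × (Fin d → ℝ) =>
            ((w 0)^k * (n.choose k : ℝ)) * (p.1^k * (T p.2)^(n-k)))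
          ((gaussianReal 0 1).prod (stdGaussianPi d)) := by
      intro k hk
      have hk8 : n - k ≤ 8 := le_trans (Nat.sub_le _ _) hn
      exact ((integrable_pow_gaussianReal k).mul_prod
        ((IH (Fin.tail w) (n-k) hk8).1)).const_mul _
    have hFint : Integrable F ((gaussianReal 0 1).prod (stdGaussianPi d)) := by
      rw [expand]
      exact integrable_finset_sum _ hterm
    have hFval : ∫ p, F p ∂((gaussianReal 0 1).prod (stdGaussianPi d))
        = ∑ k ∈ Finset.range (n+1),
          ((w 0)^k * (n.choose k : ℝ)) * (gm k * (gm (n-k) * (Fin.tail w ⬝ᵥ Fin.tail w) ^ ((n-k)/2))) := by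
      rw [expand, integral_finset_sum _ hterm]
      refine Finset.sum_congr rfl fun k hk => ?_
      have hkn : k ≤ n := Nat.lt_succ_iff.mp (Finset.mem_range.mp hk)
      have hk8 : k ≤ 8 := le_trans hkn hn
      have hk8' : n - k ≤ 8 := le_trans (Nat.sub_le _ _) hn
      rw [integral_const_mul, integral_prod_mul (f := fun x : ℝ => x^k)
        (g := fun y => (T y)^(n-k)), integral_pow_gaussianReal k hk8,
        (IH (Fin.tail w) (n-k) hk8').2]
    constructor
    · rw [hfun]
      exact (hmp.integrable_comp_emb e.measurableEmbedding).mpr hFint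
    · rw [hfun]
      have := MeasurePreserving.integral_comp hmp e.measurableEmbedding F
      rw [show ((fun g => F (e g)) = F ∘ e) from rfl] at this
      rw [this, hFval]
      have hww : w ⬝ᵥ w = w 0 * w 0 + Fin.tail w ⬝ᵥ Fin.tail w := by
        simp [dotProduct, Fin.sum_univ_succ, Fin.tail]
      rw [hww]
      set c := w 0
      set τ := Fin.tail w ⬝ᵥ Fin.tail w
      interval_cases n <;>
        (simp [Finset.sum_range_succ, gm, Nat.choose]; try ring)

lemma measurable_dot (d : ℕ) (a : Fin d → ℝ) :
    Measurable fun g : Fin d → ℝ => a ⬝ᵥ g := by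
  simp only [dotProduct]
  exact Finset.measurable_sum _ fun i _ => (measurable_pi_apply i).const_mul _

lemma mixed_integrable (d : ℕ) (a b : Fin d → ℝ) (p q : ℕ) (h8 : p + q ≤ 8)
    (hev : Even (p+q)) :
    Integrable (fun g => (a ⬝ᵥ g)^p * (b ⬝ᵥ g)^q) (stdGaussianPi d) := by
  have hXi := (dot_moment d a (p+q) h8).1
  have hYi := (dot_moment d b (p+q) h8).1
  refine Integrable.mono' (hXi.add hYi)
    (((measurable_dot d a).pow_const p).mul
      ((measurable_dot d b).pow_const q)).aestronglyMeasurable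
    (ae_of_all _ fun g => ?_)
  set x := a ⬝ᵥ g
  set y := b ⬝ᵥ g
  have h1 : |x^p * y^q| = |x|^p * |y|^q := by rw [abs_mul, abs_pow, abs_pow]
  have hx : x^(p+q) = |x|^(p+q) := (hev.pow_abs x).symm
  have hy : y^(p+q) = |y|^(p+q) := (hev.pow_abs y).symm
  simp only [Pi.add_apply, Real.norm_eq_abs]
  rw [h1, hx, hy]
  rcases le_total |x| |y| with hle | hle
  · have : |x|^p * |y|^q ≤ |y|^p * |y|^q :=
      mul_le_mul_of_nonneg_right (pow_le_pow_left₀ (abs_nonneg x) hle p) (by positivity)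
    calc |x|^p * |y|^q ≤ |y|^p * |y|^q := this
      _ = |y|^(p+q) := by rw [← pow_add]
      _ ≤ |x|^(p+q) + |y|^(p+q) := le_add_of_nonneg_left (by positivity)
  · have : |x|^p * |y|^q ≤ |x|^p * |x|^q :=
      mul_le_mul_of_nonneg_left (pow_le_pow_left₀ (abs_nonneg y) hle q) (by positivity)
    calc |x|^p * |y|^q ≤ |x|^p * |x|^q := this
      _ = |x|^(p+q) := by rw [← pow_add]
      _ ≤ |x|^(p+q) + |y|^(p+q) := le_add_of_nonneg_right (by positivity)

lemma dot_expand (d : ℕ) (a b : Fin d → ℝ) (s : ℝ) (g : Fin d → ℝ) :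
    (fun i => a i + s * b i) ⬝ᵥ g = a ⬝ᵥ g + s * (b ⬝ᵥ g) := by
  simp only [dotProduct, Finset.mul_sum, ← Finset.sum_add_distrib]
  exact Finset.sum_congr rfl fun i _ => by ring

lemma dot_self_expand (d : ℕ) (a b : Fin d → ℝ) (s : ℝ) :
    (fun i => a i + s * b i) ⬝ᵥ (fun i => a i + s * b i)
      = a ⬝ᵥ a + 2*s*(a ⬝ᵥ b) + s^2*(b ⬝ᵥ b) := by
  simp only [dotProduct, Finset.mul_sum, ← Finset.sum_add_distrib]
  exact Finset.sum_congr rfl fun i _ => by ring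

lemma hE (d : ℕ) (a b : Fin d → ℝ) (n : ℕ) (hn : n ≤ 8) (hev : Even n) (s : ℝ) :
    (∑ k ∈ Finset.range (n+1), (n.choose k : ℝ) * s^(n-k) *
      ∫ g, (a ⬝ᵥ g)^k * (b ⬝ᵥ g)^(n-k) ∂(stdGaussianPi d))
    = gm n * ((a ⬝ᵥ a) + 2*s*(a ⬝ᵥ b) + s^2*(b ⬝ᵥ b))^(n/2) := by
  have hterm : ∀ k ∈ Finset.range (n+1), Integrable
      (fun g => ((n.choose k : ℝ) * s^(n-k)) * ((a ⬝ᵥ g)^k * (b ⬝ᵥ g)^(n-k)))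
      (stdGaussianPi d) := by
    intro k hk
    have hkn : k ≤ n := Nat.lt_succ_iff.mp (Finset.mem_range.mp hk)
    have hkk : k + (n - k) = n := Nat.add_sub_cancel' hkn
    have h8' : k + (n-k) ≤ 8 := by omega
    have hev' : Even (k + (n-k)) := by rwa [hkk]
    exact (mixed_integrable d a b k (n-k) h8' hev').const_mul _
  calc (∑ k ∈ Finset.range (n+1), (n.choose k : ℝ) * s^(n-k) *
      ∫ g, (a ⬝ᵥ g)^k * (b ⬝ᵥ g)^(n-k) ∂(stdGaussianPi d))
      = ∑ k ∈ Finset.range (n+1), ∫ g, ((n.choose k : ℝ) * s^(n-k)) *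
          ((a ⬝ᵥ g)^k * (b ⬝ᵥ g)^(n-k)) ∂(stdGaussianPi d) := by
        refine Finset.sum_congr rfl fun k hk => ?_
        rw [integral_const_mul]
    _ = ∫ g, ∑ k ∈ Finset.range (n+1), ((n.choose k : ℝ) * s^(n-k)) *
          ((a ⬝ᵥ g)^k * (b ⬝ᵥ g)^(n-k)) ∂(stdGaussianPi d) :=
        (integral_finset_sum _ hterm).symm
    _ = ∫ g, ((fun i => a i + s * b i) ⬝ᵥ g)^n ∂(stdGaussianPi d) := by
        congr 1; funext g
        rw [dot_expand, add_pow]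
        refine Finset.sum_congr rfl fun k hk => ?_
        rw [mul_pow]; ring
    _ = gm n * ((fun i => a i + s * b i) ⬝ᵥ (fun i => a i + s * b i))^(n/2) :=
        (dot_moment d _ n hn).2
    _ = gm n * ((a ⬝ᵥ a) + 2*s*(a ⬝ᵥ b) + s^2*(b ⬝ᵥ b))^(n/2) := by
        rw [dot_self_expand]

lemma M22 (d : ℕ) (a b : Fin d → ℝ) :
    ∫ g, (a ⬝ᵥ g)^2 * (b ⬝ᵥ g)^2 ∂(stdGaussianPi d)
      = (a ⬝ᵥ a) * (b ⬝ᵥ b) + 2 * (a ⬝ᵥ b)^2 := by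
  have E1 := hE d a b 4 (by norm_num) (by decide) 1
  have Em1 := hE d a b 4 (by norm_num) (by decide) (-1)
  have h40 := (dot_moment d a 4 (by norm_num)).2
  have h04 := (dot_moment d b 4 (by norm_num)).2
  simp only [Finset.sum_range_succ, Finset.sum_range_zero] at E1 Em1
  norm_num [gm, Nat.choose] at E1 Em1 h40 h04
  linear_combination (1/12)*E1 + (1/12)*Em1 - (1/6)*h04 - (1/6)*h40

lemma M42 (d : ℕ) (a b : Fin d → ℝ) :
    ∫ g, (a ⬝ᵥ g)^4 * (b ⬝ᵥ g)^2 ∂(stdGaussianPi d)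
      = 3 * (a ⬝ᵥ a)^2 * (b ⬝ᵥ b) + 12 * (a ⬝ᵥ a) * (a ⬝ᵥ b)^2 := by
  have E1 := hE d a b 6 (by norm_num) (by decide) 1
  have Em1 := hE d a b 6 (by norm_num) (by decide) (-1)
  have E2 := hE d a b 6 (by norm_num) (by decide) 2
  have Em2 := hE d a b 6 (by norm_num) (by decide) (-2)
  have h60 := (dot_moment d a 6 (by norm_num)).2
  have h06 := (dot_moment d b 6 (by norm_num)).2
  simp only [Finset.sum_range_succ, Finset.sum_range_zero] at E1 Em1 E2 Em2
  norm_num [gm, Nat.choose] at E1 Em1 E2 Em2 h60 h06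
  linear_combination (2/45)*E1 + (2/45)*Em1 - (1/360)*E2 - (1/360)*Em2
    + (4/15)*h06 - (1/12)*h60

lemma M24 (d : ℕ) (a b : Fin d → ℝ) :
    ∫ g, (a ⬝ᵥ g)^2 * (b ⬝ᵥ g)^4 ∂(stdGaussianPi d)
      = 3 * (b ⬝ᵥ b)^2 * (a ⬝ᵥ a) + 12 * (b ⬝ᵥ b) * (a ⬝ᵥ b)^2 := by
  have h := M42 d b a
  rw [dotProduct_comm b a] at h
  calc ∫ g, (a ⬝ᵥ g)^2 * (b ⬝ᵥ g)^4 ∂(stdGaussianPi d)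
      = ∫ g, (b ⬝ᵥ g)^4 * (a ⬝ᵥ g)^2 ∂(stdGaussianPi d) := by
        congr 1; funext g; ring
    _ = 3 * (b ⬝ᵥ b)^2 * (a ⬝ᵥ a) + 12 * (b ⬝ᵥ b) * (a ⬝ᵥ b)^2 := h

lemma M44 (d : ℕ) (a b : Fin d → ℝ) :
    ∫ g, (a ⬝ᵥ g)^4 * (b ⬝ᵥ g)^4 ∂(stdGaussianPi d)
      = 9 * (a ⬝ᵥ a)^2 * (b ⬝ᵥ b)^2 + 72 * (a ⬝ᵥ a) * (b ⬝ᵥ b) * (a ⬝ᵥ b)^2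
        + 24 * (a ⬝ᵥ b)^4 := by
  have E1 := hE d a b 8 (by norm_num) (by decide) 1
  have Em1 := hE d a b 8 (by norm_num) (by decide) (-1)
  have E2 := hE d a b 8 (by norm_num) (by decide) 2
  have Em2 := hE d a b 8 (by norm_num) (by decide) (-2)
  have E3 := hE d a b 8 (by norm_num) (by decide) 3
  have Em3 := hE d a b 8 (by norm_num) (by decide) (-3)
  have h80 := (dot_moment d a 8 (by norm_num)).2
  have h08 := (dot_moment d b 8 (by norm_num)).2
  simp only [Finset.sum_range_succ, Finset.sum_range_zero] at E1 Em1 E2 Em2 E3 Em3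
  norm_num [gm, Nat.choose] at E1 Em1 E2 Em2 E3 Em3 h80 h08
  linear_combination (-13/3360)*E1 + (-13/3360)*Em1 + (1/840)*E2 + (1/840)*Em2
    + (-1/10080)*E3 + (-1/10080)*Em3 + (7/10)*h08 + (1/180)*h80

lemma psd_sqrt_transpose {d : ℕ} {S : Matrix (Fin d) (Fin d) ℝ} (hS : S.PosSemidef) :
    hS.sqrt.transpose = hS.sqrt := by
  unfold Matrix.PosSemidef.sqrt
  have hst : ∀ M : Matrix (Fin d) (Fin d) ℝ, star M = Mᵀ := fun M =>
    conjTranspose_eq_transpose_of_trivial M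
  rw [hst, transpose_mul, transpose_mul, transpose_transpose, diagonal_transpose,
    mul_assoc]

lemma psd_sqrt_mul_self {d : ℕ} {S : Matrix (Fin d) (Fin d) ℝ} (hS : S.PosSemidef) :
    hS.sqrt * hS.sqrt = S := by
  unfold Matrix.PosSemidef.sqrt
  have hU := Unitary.coe_star_mul_self hS.1.eigenvectorUnitary
  have hD : diagonal (RCLike.ofReal ∘ (fun x => √x) ∘ hS.1.eigenvalues : Fin d → ℝ) * diagonal (RCLike.ofReal ∘ (fun x => √x) ∘ hS.1.eigenvalues : Fin d → ℝ)
      = diagonal (RCLike.ofReal ∘ hS.1.eigenvalues : Fin d → ℝ) := by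
    rw [diagonal_mul_diagonal]
    congr 1; funext i
    simp only [Function.comp_apply, RCLike.ofReal_real_eq_id, id]
    exact Real.mul_self_sqrt (hS.eigenvalues_nonneg i)
  conv_rhs => rw [hS.1.spectral_theorem, Unitary.conjStarAlgAut_apply]
  rw [← hD]
  simp only [mul_assoc]
  rw [← mul_assoc (star (hS.1.eigenvectorUnitary : Matrix (Fin d) (Fin d) ℝ)), hU, one_mul]

/-- let `t = Tr(Σ²)` and let `x ~ N(0, Σ)` on `ℝ^d` (realized as
`x = Σ^{1/2} g` with `g` standard Gaussian).  For deterministic `u, v ∈ ℝ^d`,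
`E[(⟨u,x⟩⁴ − 6t⟨u,x⟩² + 3t²)(⟨v,x⟩⁴ − 6t⟨v,x⟩² + 3t²)]
  = 24·(uᵀΣv)⁴ + 72·(uᵀΣu − t)(vᵀΣv − t)(uᵀΣv)² + 9·(uᵀΣu − t)²(vᵀΣv − t)²`. -/
theorem gaussian_hermite4_covariance {d : ℕ} (S : Matrix (Fin d) (Fin d) ℝ)
    (hS : S.PosSemidef) (u v : Fin d → ℝ) :
    ∫ g : Fin d → ℝ,
        ((u ⬝ᵥ hS.sqrt.mulVec g) ^ 4 - 6 * (S * S).trace * (u ⬝ᵥ hS.sqrt.mulVec g) ^ 2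
            + 3 * (S * S).trace ^ 2)
          * ((v ⬝ᵥ hS.sqrt.mulVec g) ^ 4 - 6 * (S * S).trace * (v ⬝ᵥ hS.sqrt.mulVec g) ^ 2
            + 3 * (S * S).trace ^ 2)
        ∂(stdGaussianPi d)
      = 24 * (u ⬝ᵥ S.mulVec v) ^ 4
        + 72 * (u ⬝ᵥ S.mulVec u - (S * S).trace) * (v ⬝ᵥ S.mulVec v - (S * S).trace)
            * (u ⬝ᵥ S.mulVec v) ^ 2
        + 9 * (u ⬝ᵥ S.mulVec u - (S * S).trace) ^ 2
            * (v ⬝ᵥ S.mulVec v - (S * S).trace) ^ 2 := by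
  set R := hS.sqrt with hR
  set t := (S * S).trace with ht
  set a := u ᵥ* R with ha
  set b := v ᵥ* R with hb
  have hRt : Rᵀ = R := psd_sqrt_transpose hS
  have hRR : R * R = S := psd_sqrt_mul_self hS
  have hXg : ∀ g, u ⬝ᵥ R.mulVec g = a ⬝ᵥ g := fun g => dotProduct_mulVec u R g
  have hYg : ∀ g, v ⬝ᵥ R.mulVec g = b ⬝ᵥ g := fun g => dotProduct_mulVec v R g
  have hdot : ∀ x y : Fin d → ℝ, (x ᵥ* R) ⬝ᵥ (y ᵥ* R) = x ⬝ᵥ S.mulVec y := by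
    intro x y
    rw [← dotProduct_mulVec, ← mulVec_transpose, hRt, mulVec_mulVec, hRR]
  have haa : a ⬝ᵥ a = u ⬝ᵥ S.mulVec u := hdot u u
  have hbb : b ⬝ᵥ b = v ⬝ᵥ S.mulVec v := hdot v v
  have hab : a ⬝ᵥ b = u ⬝ᵥ S.mulVec v := hdot u v
  simp only [hXg, hYg]
  have key : (fun g : Fin d → ℝ =>
      ((a ⬝ᵥ g) ^ 4 - 6 * t * (a ⬝ᵥ g) ^ 2 + 3 * t ^ 2)
        * ((b ⬝ᵥ g) ^ 4 - 6 * t * (b ⬝ᵥ g) ^ 2 + 3 * t ^ 2))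
      = fun g : Fin d → ℝ =>
      (a ⬝ᵥ g)^4 * (b ⬝ᵥ g)^4 - 6*t * ((a ⬝ᵥ g)^4 * (b ⬝ᵥ g)^2)
        - 6*t * ((a ⬝ᵥ g)^2 * (b ⬝ᵥ g)^4) + 36*t^2 * ((a ⬝ᵥ g)^2 * (b ⬝ᵥ g)^2)
        + 3*t^2 * (a ⬝ᵥ g)^4 + 3*t^2 * (b ⬝ᵥ g)^4
        - 18*t^3 * (a ⬝ᵥ g)^2 - 18*t^3 * (b ⬝ᵥ g)^2 + 9*t^4 := by
    funext g; ring
  rw [key]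
  have i1 := mixed_integrable d a b 4 4 (by norm_num) (by decide)
  have i2 := (mixed_integrable d a b 4 2 (by norm_num) (by decide)).const_mul (6*t)
  have i3 := (mixed_integrable d a b 2 4 (by norm_num) (by decide)).const_mul (6*t)
  have i4 := (mixed_integrable d a b 2 2 (by norm_num) (by decide)).const_mul (36*t^2)
  have i5 := ((dot_moment d a 4 (by norm_num)).1).const_mul (3*t^2)
  have i6 := ((dot_moment d b 4 (by norm_num)).1).const_mul (3*t^2)
  have i7 := ((dot_moment d a 2 (by norm_num)).1).const_mul (18*t^3)
  have i8 := ((dot_moment d b 2 (by norm_num)).1).const_mul (18*t^3)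
  have j1 : Integrable (fun g : Fin d → ℝ => (a ⬝ᵥ g) ^ 4 * (b ⬝ᵥ g) ^ 4 - 6 * t * ((a ⬝ᵥ g) ^ 4 * (b ⬝ᵥ g) ^ 2)) (stdGaussianPi d) := i1.sub i2
  have j2 : Integrable (fun g : Fin d → ℝ => (a ⬝ᵥ g) ^ 4 * (b ⬝ᵥ g) ^ 4 - 6 * t * ((a ⬝ᵥ g) ^ 4 * (b ⬝ᵥ g) ^ 2) - 6 * t * ((a ⬝ᵥ g) ^ 2 * (b ⬝ᵥ g) ^ 4)) (stdGaussianPi d) := j1.sub i3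
  have j3 : Integrable (fun g : Fin d → ℝ => (a ⬝ᵥ g) ^ 4 * (b ⬝ᵥ g) ^ 4 - 6 * t * ((a ⬝ᵥ g) ^ 4 * (b ⬝ᵥ g) ^ 2) - 6 * t * ((a ⬝ᵥ g) ^ 2 * (b ⬝ᵥ g) ^ 4) + 36 * t ^ 2 * ((a ⬝ᵥ g) ^ 2 * (b ⬝ᵥ g) ^ 2)) (stdGaussianPi d) := j2.add i4
  have j4 : Integrable (fun g : Fin d → ℝ => (a ⬝ᵥ g) ^ 4 * (b ⬝ᵥ g) ^ 4 - 6 * t * ((a ⬝ᵥ g) ^ 4 * (b ⬝ᵥ g) ^ 2) - 6 * t * ((a ⬝ᵥ g) ^ 2 * (b ⬝ᵥ g) ^ 4) + 36 * t ^ 2 * ((a ⬝ᵥ g) ^ 2 * (b ⬝ᵥ g) ^ 2) + 3 * t ^ 2 * (a ⬝ᵥ g) ^ 4) (stdGaussianPi d) := j3.add i5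
  have j5 : Integrable (fun g : Fin d → ℝ => (a ⬝ᵥ g) ^ 4 * (b ⬝ᵥ g) ^ 4 - 6 * t * ((a ⬝ᵥ g) ^ 4 * (b ⬝ᵥ g) ^ 2) - 6 * t * ((a ⬝ᵥ g) ^ 2 * (b ⬝ᵥ g) ^ 4) + 36 * t ^ 2 * ((a ⬝ᵥ g) ^ 2 * (b ⬝ᵥ g) ^ 2) + 3 * t ^ 2 * (a ⬝ᵥ g) ^ 4 + 3 * t ^ 2 * (b ⬝ᵥ g) ^ 4) (stdGaussianPi d) := j4.add i6
  have j6 : Integrable (fun g : Fin d → ℝ => (a ⬝ᵥ g) ^ 4 * (b ⬝ᵥ g) ^ 4 - 6 * t * ((a ⬝ᵥ g) ^ 4 * (b ⬝ᵥ g) ^ 2) - 6 * t * ((a ⬝ᵥ g) ^ 2 * (b ⬝ᵥ g) ^ 4) + 36 * t ^ 2 * ((a ⬝ᵥ g) ^ 2 * (b ⬝ᵥ g) ^ 2) + 3 * t ^ 2 * (a ⬝ᵥ g) ^ 4 + 3 * t ^ 2 * (b ⬝ᵥ g) ^ 4 - 18 * t ^ 3 * (a ⬝ᵥ g) ^ 2)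 (stdGaussianPi d) := j5.sub i7
  have j7 : Integrable (fun g : Fin d → ℝ => (a ⬝ᵥ g) ^ 4 * (b ⬝ᵥ g) ^ 4 - 6 * t * ((a ⬝ᵥ g) ^ 4 * (b ⬝ᵥ g) ^ 2) - 6 * t * ((a ⬝ᵥ g) ^ 2 * (b ⬝ᵥ g) ^ 4) + 36 * t ^ 2 * ((a ⬝ᵥ g) ^ 2 * (b ⬝ᵥ g) ^ 2) + 3 * t ^ 2 * (a ⬝ᵥ g) ^ 4 + 3 * t ^ 2 * (b ⬝ᵥ g) ^ 4 - 18 * t ^ 3 * (a ⬝ᵥ g) ^ 2 - 18 * t ^ 3 * (b ⬝ᵥ g) ^ 2) (stdGaussianPi d) := j6.sub i8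
  rw [integral_add j7 (integrable_const _),
    integral_sub j6 i8,
    integral_sub j5 i7,
    integral_add j4 i6,
    integral_add j3 i5,
    integral_add j2 i4,
    integral_sub j1 i3,
    integral_sub i1 i2,
    integral_const_mul, integral_const_mul, integral_const_mul, integral_const_mul,
    integral_const_mul, integral_const_mul, integral_const_mul, integral_const]
  have h4a := (dot_moment d a 4 (by norm_num)).2
  have h4b := (dot_moment d b 4 (by norm_num)).2
  have h2a := (dot_moment d a 2 (by norm_num)).2
  have h2b := (dot_moment d b 2 (by norm_num)).2
  norm_num [gm] at h4a h4b h2a h2b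
  rw [M44 d a b, M42 d a b, M24 d a b, M22 d a b, h4a, h4b, h2a, h2b,
    haa, hbb, hab]
  simp only [probReal_univ, one_smul, smul_eq_mul, one_mul]
  ring
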